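/- arXiv:0803.2746 — 7 statements merged into one kernel-verified Lean document; each statement's English description precedes it below -/
import Mathlib

section
/- Let V be a vector space over a field F (of any cardinality), with dim V > k ≥ 1. Then V is a union of a family of codimension-k subspaces indexed by the projective space P(F^{k+1}): explicitly, fixing a basis containing v_0,...,v_k, for each projective point x one takes the span of the remaining basis vectors together with one suitable vector. -/
theorem stmt_11 (F V : Type*) [Field F] [AddCommGroup V] [Module F V]
    (k : ℕ) (hk : 1 ≤ k) (hdim : (k : Cardinal) < Module.rank F V) :
    ∃ W : Projectivization F (Fin (k + 1) → F) → Submodule F V,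
      (∀ x, Module.finrank F (V ⧸ W x) = k) ∧
      (⋃ x, (W x : Set V)) = Set.univ := by
  classical
  obtain ⟨f, hf⟩ : ∃ f : V →ₗ[F] (Fin (k + 1) → F), Function.Surjective f := by
    set b := Module.Basis.ofVectorSpace F V
    have hcard : ((k + 1 : ℕ) : Cardinal) ≤ Cardinal.mk (Module.Basis.ofVectorSpaceIndex F V) := by
      rw [← b.mk_eq_rank''] at hdim
      calc ((k + 1 : ℕ) : Cardinal) = Order.succ (k : Cardinal) := by
            rw [← Cardinal.nat_succ]
        _ ≤ _ := Order.succ_le_of_lt hdim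
    obtain ⟨e⟩ : Nonempty (Fin (k + 1) ↪ Module.Basis.ofVectorSpaceIndex F V) := by
      exact Cardinal.lift_mk_le'.mp (by simpa using hcard)
    refine ⟨b.constr F (Function.extend e (fun j => Pi.single j 1) 0), ?_⟩
    rw [← LinearMap.range_eq_top]
    refine top_unique ?_
    rw [← (Pi.basisFun F (Fin (k + 1))).span_eq, Submodule.span_le]
    rintro _ ⟨j, rfl⟩
    refine ⟨b (e j), ?_⟩
    rw [Module.Basis.constr_basis, Function.Injective.extend_apply e.injective]
    simp [Pi.basisFun_apply]
  refine ⟨fun x => Submodule.comap f x.submodule, ?_, ?_⟩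
  · intro x
    have hx : Module.finrank F ((Fin (k + 1) → F) ⧸ x.submodule) = k := by
      have h1 : Module.finrank F x.submodule = 1 := by
        rw [Projectivization.submodule_eq]
        exact finrank_span_singleton x.rep_nonzero
      have h2 := Submodule.finrank_quotient_add_finrank x.submodule
      have htot : Module.finrank F (Fin (k + 1) → F) = k + 1 := by simp
      omega
    let g := Submodule.mapQ (Submodule.comap f x.submodule) x.submodule f le_rfl
    have hg : Function.Bijective g := by
      constructor
      · rw [← LinearMap.ker_eq_bot, LinearMap.ker_eq_bot']
        intro y hy
        obtain ⟨v, rfl⟩ := Submodule.Quotient.mk_surjective _ y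
        simp only [g, Submodule.mapQ_apply, Submodule.Quotient.mk_eq_zero] at hy ⊢
        exact hy
      · intro y
        obtain ⟨w, rfl⟩ := Submodule.Quotient.mk_surjective _ y
        obtain ⟨v, rfl⟩ := hf w
        exact ⟨Submodule.Quotient.mk v, by simp only [g, Submodule.mapQ_apply]⟩
    exact (LinearEquiv.finrank_eq (LinearEquiv.ofBijective g hg)).trans hx
  · ext v
    simp only [Set.mem_iUnion, Set.mem_univ, iff_true, SetLike.mem_coe]
    by_cases h : f v = 0
    · have hne : (Pi.single 0 1 : Fin (k + 1) → F) ≠ 0 := by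
        intro hz
        have := congrFun hz 0
        simp at this
      exact ⟨Projectivization.mk F (Pi.single 0 1) hne, by
        simp only [Submodule.mem_comap, h]; exact Submodule.zero_mem _⟩
    · refine ⟨Projectivization.mk F (f v) h, ?_⟩
      simp only [Submodule.mem_comap, Projectivization.submodule_mk]
      exact Submodule.mem_span_singleton_self _
end

section
/- If a vector space V over a field F is covered by finitely many proper subspaces V_1, ..., V_n, then n ≥ |F| + 1 when F is finite, and no finite n suffices when F is infinite. Equivalently: if V = V_1 ∪ ... ∪ V_n with each V_i proper, then n > |F|. -/
lemma aux_avoid (F V : Type*) [Field F] [Fintype F] [AddCommGroup V] [Module F V] :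
    ∀ n : ℕ, n ≤ Fintype.card F → ∀ W : Fin n → Submodule F V, (∀ i, W i ≠ ⊤) →
      ∃ x : V, ∀ i, x ∉ W i := by
  intro n
  induction n with
  | zero => exact fun _ _ _ => ⟨0, fun i => i.elim0⟩
  | succ n ih =>
    intro hn W hW
    obtain ⟨w, hw⟩ := ih (le_trans (Nat.le_succ n) hn) (fun i => W i.succ)
      (fun i => hW i.succ)
    by_cases hw0 : w ∉ W 0
    · exact ⟨w, fun i => Fin.cases hw0 hw i⟩
    push_neg at hw0
    obtain ⟨v, -, hv⟩ := SetLike.exists_of_lt ((hW 0).lt_top)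
    by_contra hcon
    push_neg at hcon
    have h : ∀ t : F, ∃ i : Fin n, v + t • w ∈ W i.succ := by
      intro t
      obtain ⟨i, hi⟩ := hcon (v + t • w)
      refine Fin.cases ?_ (fun j hj => ⟨j, hj⟩) i hi
      intro h0
      exact absurd (by simpa using (W 0).sub_mem h0 ((W 0).smul_mem t hw0)) hv
    choose f hf using h
    have hinj : Function.Injective f := by
      intro t t' htt
      by_contra hne
      have hmem : (t - t') • w ∈ W (f t).succ := by
        have := (W (f t).succ).sub_mem (hf t) (htt ▸ hf t')
        simpa [sub_smul] using this
      have : w ∈ W (f t).succ := by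
        have := (W (f t).succ).smul_mem (t - t')⁻¹ hmem
        rwa [inv_smul_smul₀ (sub_ne_zero.mpr hne)] at this
      exact hw (f t) this
    have := Fintype.card_le_of_injective f hinj
    simp only [Fintype.card_fin] at this
    omega

theorem stmt_12 (F V : Type*) [Field F] [AddCommGroup V] [Module F V]
    (n : ℕ) (W : Fin n → Submodule F V) (hW : ∀ i, W i ≠ ⊤)
    (hcov : (⋃ i, (W i : Set V)) = Set.univ) :
    Cardinal.mk F < n := by
  cases finite_or_infinite F with
  | inr hF =>
    obtain ⟨i, hi⟩ := Subspace.exists_eq_top_of_iUnion_eq_univ hcov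
    exact absurd hi (hW i)
  | inl hF =>
    have := Fintype.ofFinite F
    rw [Cardinal.mk_fintype, Nat.cast_lt]
    by_contra hle
    push_neg at hle
    obtain ⟨x, hx⟩ := aux_avoid F V n hle W hW
    have : x ∈ (⋃ i, (W i : Set V)) := hcov ▸ Set.mem_univ x
    obtain ⟨i, hi⟩ := Set.mem_iUnion.mp this
    exact hx i hi
end

section
/- Suppose V_1, ..., V_n are proper subspaces of a finite-dimensional vector space V covering V, such that no V_i is contained in the union of the others. If v_1 ∈ V_1 and v_2 ∈ V_2 lie only in V_1 and V_2 respectively, then the map sending each element of {v_1 + αv_2 : α ∈ F} ∪ {v_2} to an index i with the element in V_i must fail to be injective only if two elements of this set lie in a common V_i, which forces v_1, v_2 ∈ V_i, contradicting i distinct. Hence n ≥ |F| + 1. -/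
theorem stmt_13 (F V : Type*) [Field F] [AddCommGroup V] [Module F V]
    (n : ℕ) (W : Fin n → Submodule F V) (hW : ∀ i, W i ≠ ⊤)
    (hcov : (⋃ i, (W i : Set V)) = Set.univ)
    (hmin : ∀ i, ¬ ((W i : Set V) ⊆ ⋃ j ∈ ({i}ᶜ : Set (Fin n)), (W j : Set V))) :
    Cardinal.mk F + 1 ≤ n := by
  -- every vector is in some W i
  have hmem : ∀ v : V, ∃ i, v ∈ W i := by
    intro v
    have : v ∈ ⋃ i, (W i : Set V) := by rw [hcov]; trivial
    simpa using this
  obtain ⟨i0, _⟩ := hmem 0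
  have hn1 : 0 < n := i0.pos
  -- n ≥ 2
  have hn2 : 2 ≤ n := by
    by_contra h
    have hn : n = 1 := by omega
    apply hW i0
    rw [eq_top_iff]
    intro v _
    obtain ⟨j, hj⟩ := hmem v
    have : j = i0 := by
      apply Fin.ext
      omega
    rwa [this] at hj
  set i1 : Fin n := ⟨0, by omega⟩ with hi1
  set i2 : Fin n := ⟨1, by omega⟩ with hi2
  have hne : i1 ≠ i2 := by
    simp [hi1, hi2, Fin.ext_iff]
  obtain ⟨v₁, hv₁, hv₁'⟩ := Set.not_subset.mp (hmin i1)
  obtain ⟨v₂, hv₂, hv₂'⟩ := Set.not_subset.mp (hmin i2)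
  have hv₁'' : ∀ j, j ≠ i1 → v₁ ∉ W j := by
    intro j hj hmem'
    exact hv₁' (Set.mem_biUnion hj hmem')
  have hv₂'' : ∀ j, j ≠ i2 → v₂ ∉ W j := by
    intro j hj hmem'
    exact hv₂' (Set.mem_biUnion hj hmem')
  choose f hf using fun α : F => hmem (v₁ + α • v₂)
  -- f α ≠ i2
  have hfne : ∀ α, f α ≠ i2 := by
    intro α h
    have h1 : v₁ + α • v₂ ∈ W i2 := h ▸ hf α
    have h2 : v₁ ∈ W i2 := by
      have := (W i2).sub_mem h1 ((W i2).smul_mem α hv₂)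
      simpa using this
    exact hv₁'' i2 (Ne.symm hne) h2
  -- f injective
  have hfinj : Function.Injective f := by
    intro α β h
    by_contra hab
    have h1 : v₁ + α • v₂ ∈ W (f α) := hf α
    have h2 : v₁ + β • v₂ ∈ W (f α) := h ▸ hf β
    have h3 : (α - β) • v₂ ∈ W (f α) := by
      have := (W (f α)).sub_mem h1 h2
      simpa [sub_smul] using this
    have h4 : v₂ ∈ W (f α) := by
      have := (W (f α)).smul_mem (α - β)⁻¹ h3
      rwa [smul_smul, inv_mul_cancel₀ (sub_ne_zero.mpr hab), one_smul] at this
    exact hfne α (by by_contra h5; exact hv₂'' _ h5 h4)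
  -- build injection Option F ↪ Fin n
  have hg : Function.Injective (fun o : Option F => o.elim i2 f) := by
    intro a b hab
    match a, b with
    | none, none => rfl
    | none, some β => exact absurd hab.symm (hfne β)
    | some α, none => exact absurd hab (hfne α)
    | some α, some β => exact congrArg some (hfinj hab)
  have hg' : Function.Injective (fun o : Option F => ULift.up.{_,0} (o.elim i2 f)) :=
    fun a b hab => hg (congrArg ULift.down hab)
  calc Cardinal.mk F + 1 = Cardinal.mk (Option F) := (Cardinal.mk_option).symm
    _ ≤ Cardinal.mk (ULift.{_,0} (Fin n)) := Cardinal.mk_le_of_injective hg'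
    _ = n := by simp
end

section
/- Let V be an n-dimensional vector space over F_q and let k with 1 ≤ k < n. If V is the union of a family of subspaces each of codimension at least k, then the family has at least (q^n - 1)/(q^{n-k} - 1) members (hence at least ⌈(q^n-1)/(q^{n-k}-1)⌉). -/
theorem stmt_15 (F : Type*) [Field F] [Fintype F] (q n k : ℕ)
    (hq : Fintype.card F = q) (hk1 : 1 ≤ k) (hkn : k < n)
    (s : Finset (Submodule F (Fin n → F)))
    (hdim : ∀ W ∈ s, Module.finrank F W ≤ n - k)
    (hcov : (⋃ W ∈ s, (W : Set (Fin n → F))) = Set.univ) :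
    ((q ^ n - 1 : ℚ) / (q ^ (n - k) - 1)) ≤ s.card := by
  classical
  have hq2 : 2 ≤ q := hq ▸ Fintype.one_lt_card
  have hnk1 : 1 ≤ n - k := Nat.le_sub_of_add_le (by omega)
  set V := Fin n → F
  -- Finset version of each subspace
  let f : Submodule F V → Finset V := fun W => (Set.toFinite (W : Set V)).toFinset
  have hfcard : ∀ W ∈ s, (f W \ {0}).card ≤ q ^ (n - k) - 1 := by
    intro W hW
    have h0 : (0 : V) ∈ f W := by
      rw [Set.Finite.mem_toFinset]; exact W.zero_mem
    have hcard : (f W).card = q ^ Module.finrank F W := by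
      have h1 : (f W).card = Nat.card W := by
        rw [Set.Finite.card_toFinset, ← Nat.card_eq_fintype_card, SetLike.coe_sort_coe]
      rw [h1, Nat.card_eq_fintype_card, ← hq, Module.card_eq_pow_finrank (K := F) (V := W)]
    have : (f W \ {0}).card = (f W).card - 1 := by
      rw [Finset.card_sdiff_of_subset (by simpa using h0)]
      simp
    rw [this, hcard]
    have : q ^ Module.finrank F W ≤ q ^ (n - k) :=
      Nat.pow_le_pow_right (by omega) (hdim W hW)
    omega
  -- the nonzero vectors
  have hcoverF : Finset.univ \ {(0 : V)} ⊆ s.biUnion (fun W => f W \ {0}) := by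
    intro v hv
    have hv0 : v ≠ 0 := by simpa using hv
    have : v ∈ (⋃ W ∈ s, (W : Set V)) := hcov ▸ Set.mem_univ v
    obtain ⟨W, hW, hvW⟩ := by simpa using this
    refine Finset.mem_biUnion.2 ⟨W, hW, Finset.mem_sdiff.2 ⟨?_, by simpa⟩⟩
    rw [Set.Finite.mem_toFinset]; exact hvW
  have hcardV : (Finset.univ \ {(0 : V)}).card = q ^ n - 1 := by
    rw [Finset.card_sdiff_of_subset (by simp)]
    show Fintype.card (Fin n → F) - 1 = q ^ n - 1
    simp [hq]
  have hmain : q ^ n - 1 ≤ s.card * (q ^ (n - k) - 1) := by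
    calc q ^ n - 1 = (Finset.univ \ {(0 : V)}).card := hcardV.symm
      _ ≤ (s.biUnion (fun W => f W \ {0})).card := Finset.card_le_card hcoverF
      _ ≤ ∑ W ∈ s, (f W \ {0}).card := Finset.card_biUnion_le
      _ ≤ ∑ W ∈ s, (q ^ (n - k) - 1) := Finset.sum_le_sum hfcard
      _ = s.card * (q ^ (n - k) - 1) := by rw [Finset.sum_const, smul_eq_mul]
  have h1 : (1 : ℕ) ≤ q ^ (n - k) := Nat.one_le_pow _ _ (by omega)
  have h1' : (1 : ℕ) ≤ q ^ n := Nat.one_le_pow _ _ (by omega)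
  have hpos : (0 : ℚ) < q ^ (n - k) - 1 := by
    have : (2 : ℚ) ≤ q ^ (n - k) := by
      calc (2 : ℚ) ≤ (q : ℚ) := by exact_mod_cast hq2
        _ ≤ (q : ℚ) ^ (n - k) := by
          exact_mod_cast Nat.le_self_pow (by omega) q
    linarith
  rw [div_le_iff₀ hpos]
  have key : ((q ^ n - 1 : ℕ) : ℚ) ≤ ((s.card * (q ^ (n - k) - 1) : ℕ) : ℚ) :=
    Nat.cast_le.2 hmain
  rw [Nat.cast_sub h1', Nat.cast_mul, Nat.cast_sub h1] at key
  push_cast at key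
  exact key
end

section
/- Let V = F_q^n and let d satisfy 1 < d < n/2. Then V can be partitioned into one subspace of dimension n-d and q^{n-d} subspaces of dimension d, all pairwise intersecting only in 0 and covering V. -/
open Polynomial Module

noncomputable section

universe u
theorem my_exists_ext (F : Type u) [Field F] [Fintype F] (m : ℕ) (hm : m ≠ 0) :
    ∃ (E : Type u) (_ : Field E) (_ : Algebra F E),
      FiniteDimensional F E ∧ Module.finrank F E = m := by
  classical
  set p := ringChar F with hpdef
  haveI hCF : CharP F p := ringChar.charP F
  have hprime : p.Prime := CharP.char_is_prime F p
  haveI : Fact p.Prime := ⟨hprime⟩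
  obtain ⟨k, hk⟩ := FiniteField.card F p
  set q := Fintype.card F with hq
  clear_value p q
  have hNne : (k : ℕ) * m ≠ 0 := Nat.mul_ne_zero k.2.ne' hm
  have hp1 : 1 < p := hprime.one_lt
  set g : F[X] := X ^ p ^ ((k : ℕ) * m) - X with hg
  set E := SplittingField g with hE
  have hfd : FiniteDimensional F E := by dsimp only [E]; infer_instance
  refine ⟨E, inferInstance, inferInstance, hfd, ?_⟩
  haveI : CharP E p := (Algebra.charP_iff F E p).mp hCF
  haveI : Fintype E := Fintype.ofFinite E
  have aux : g ≠ 0 := FiniteField.X_pow_card_pow_sub_X_ne_zero _ hNne hp1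
  have key : Fintype.card (g.rootSet E) = g.natDegree :=
    card_rootSet_eq_natDegree (galois_poly_separable p _ (dvd_pow_self p hNne))
      (SplittingField.splits g)
  have nat_degree_eq : g.natDegree = p ^ ((k : ℕ) * m) :=
    FiniteField.X_pow_card_pow_sub_X_natDegree_eq _ hNne hp1
  rw [nat_degree_eq] at key
  have huniv : g.rootSet E = Set.univ := by
    rw [Set.eq_univ_iff_forall]
    suffices h : ∀ (x) (_ : x ∈ (⊤ : Subalgebra F E)), x ∈ g.rootSet E by simpa using h
    rw [← SplittingField.adjoin_rootSet]
    simp_rw [Algebra.mem_adjoin_iff]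
    intro x hx
    refine Subring.closure_induction ?_ ?_ ?_ ?_ ?_ ?_ hx <;> simp_rw [mem_rootSet_of_ne aux]
    · rintro x (⟨r, rfl⟩ | hx)
      · simp only [g, map_sub, map_pow, aeval_X]
        have hr : r ^ p ^ ((k : ℕ) * m) = r := by
          rw [pow_mul, ← hk.2, hq, FiniteField.pow_card_pow]
        rw [← map_pow, hr, sub_self]
      · rwa [mem_rootSet_of_ne aux] at hx
    · rw [← coeff_zero_eq_aeval_zero']
      simp only [g, coeff_X_pow, coeff_X_zero, sub_zero, _root_.map_eq_zero, ite_eq_right_iff,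
        one_ne_zero, coeff_sub]
      intro hn
      exact Nat.not_lt_zero 1 (eq_zero_of_pow_eq_zero hn.symm ▸ hp1)
    · simp [g]
    · simp only [g, aeval_X_pow, aeval_X, map_sub, add_pow_char_pow, sub_eq_zero]
      intro x y _ _ hx hy
      rw [hx, hy]
    · intro x _ hx
      simp only [g, sub_eq_zero, aeval_X_pow, aeval_X, map_sub, sub_neg_eq_add] at *
      rw [neg_pow, hx, neg_one_pow_char_pow]
      ring
    · simp only [g, aeval_X_pow, aeval_X, map_sub, mul_pow, sub_eq_zero]
      intro x y _ _ hx hy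
      rw [hx, hy]
  simp_rw [huniv, ← Fintype.ofEquiv_card (Equiv.Set.univ _)] at key
  rw [@card_eq_pow_finrank F _ _ _ _ _ (_), ← hq, hk.2, ← pow_mul] at key
  have := Nat.pow_right_injective hprime.two_le key
  exact Nat.eq_of_mul_eq_mul_left k.2 this

theorem stmt_17 (F : Type*) [Field F] [Fintype F] (q n d : ℕ)
    (hq : Fintype.card F = q) (hd : 1 < d) (hdn : 2 * d < n) :
    ∃ (W₀ : Submodule F (Fin n → F)) (f : Fin (q ^ (n - d)) → Submodule F (Fin n → F)),
      Module.finrank F W₀ = n - d ∧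
      (∀ i, Module.finrank F (f i) = d) ∧
      (∀ i, W₀ ⊓ f i = ⊥) ∧
      (∀ i j, i ≠ j → f i ⊓ f j = ⊥) ∧
      (W₀ : Set (Fin n → F)) ∪ (⋃ i, (f i : Set (Fin n → F))) = Set.univ := by
  classical
  have hdm : d < n - d := by omega
  obtain ⟨E, _, _, hFD, hrank⟩ := my_exists_ext F (n - d) (by omega)
  haveI : FiniteDimensional F E := hFD
  haveI : Finite E := Module.finite_of_finite F
  haveI : Fintype E := Fintype.ofFinite E
  have hcardE : Fintype.card E = q ^ (n - d) := by
    rw [card_eq_pow_finrank (K := F), hrank, hq]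
  -- the injection of F^d into E
  let b : Basis (Fin (n - d)) F E := Module.finBasisOfFinrankEq F E hrank
  let ι₀ : (Fin d → F) →ₗ[F] (Fin (n - d) → F) :=
    { toFun := fun y j => if h : (j : ℕ) < d then y ⟨j, h⟩ else 0
      map_add' := by intro y z; funext j; by_cases h : (j : ℕ) < d <;> simp [h]
      map_smul' := by intro c y; funext j; by_cases h : (j : ℕ) < d <;> simp [h] }
  let ι : (Fin d → F) →ₗ[F] E := b.equivFun.symm.toLinearMap ∘ₗ ι₀
  have hι₀ : Function.Injective ι₀ := by
    intro y z h
    funext i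
    have := congrFun h ⟨(i : ℕ), lt_trans i.2 hdm⟩
    simpa [ι₀, i.2] using this
  have hιinj : Function.Injective ι :=
    fun y z h => hι₀ (b.equivFun.symm.injective h)
  have hιne : ∀ y : Fin d → F, y ≠ 0 → ι y ≠ 0 := by
    intro y hy h
    exact hy (hιinj (by simpa using h))
  -- the linear maps whose graphs are the spread
  let L : E → ((Fin d → F) →ₗ[F] (E × (Fin d → F))) :=
    fun a => ((LinearMap.mulLeft F a) ∘ₗ ι).prod LinearMap.id
  have hL : ∀ a y, L a y = (a * ι y, y) := fun a y => rfl
  have hLinj : ∀ a, Function.Injective (L a) := by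
    intro a y z h
    exact congrArg Prod.snd h
  let W₀' : Submodule F (E × (Fin d → F)) := Submodule.fst F E (Fin d → F)
  let f' : E → Submodule F (E × (Fin d → F)) := fun a => LinearMap.range (L a)
  have hmemW₀' : ∀ v : E × (Fin d → F), v ∈ W₀' ↔ v.2 = 0 := by
    intro v; simp [W₀', Submodule.fst]
  have hW₀rank : Module.finrank F W₀' = n - d := by
    rw [(Submodule.fstEquiv F E (Fin d → F)).finrank_eq, hrank]
  have hfrank : ∀ a, Module.finrank F (f' a) = d := by
    intro a
    rw [LinearMap.finrank_range_of_inj (hLinj a), Module.finrank_fin_fun]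
  have hinf0 : ∀ a, W₀' ⊓ f' a = ⊥ := by
    intro a
    rw [eq_bot_iff]
    rintro v ⟨h1, z, rfl⟩
    have hz : z = 0 := by
      have := (hmemW₀' (L a z)).mp h1
      simpa [hL] using this
    simp [Submodule.mem_bot, hz, hL]
  have hinf : ∀ a c : E, a ≠ c → f' a ⊓ f' c = ⊥ := by
    intro a c hac
    rw [eq_bot_iff]
    rintro v ⟨⟨z, rfl⟩, w, hw⟩
    rw [hL, hL, Prod.mk.injEq] at hw
    obtain ⟨h1, h2⟩ := hw
    subst h2
    have : (c - a) * ι w = 0 := by rw [sub_mul, h1, sub_self]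
    have hzw : ι w = 0 := by
      rcases mul_eq_zero.mp this with h | h
      · exact absurd (sub_eq_zero.mp h) hac.symm
      · exact h
    have hw0 : w = 0 := by
      by_contra hne
      exact hιne w hne hzw
    simp [Submodule.mem_bot, hL, hw0]
  have hcover : ∀ v : E × (Fin d → F), v ∈ W₀' ∨ ∃ a, v ∈ f' a := by
    intro v
    by_cases h2 : v.2 = 0
    · exact Or.inl ((hmemW₀' v).mpr h2)
    · refine Or.inr ⟨v.1 * (ι v.2)⁻¹, ⟨v.2, ?_⟩⟩
      rw [hL, mul_assoc, inv_mul_cancel₀ (hιne v.2 h2), mul_one]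
  -- transport to Fin n → F
  have hfr : Module.finrank F (E × (Fin d → F)) = Module.finrank F (Fin n → F) := by
    rw [Module.finrank_prod, hrank, Module.finrank_fin_fun, Module.finrank_fin_fun]
    omega
  let σ : (E × (Fin d → F)) ≃ₗ[F] (Fin n → F) := LinearEquiv.ofFinrankEq _ _ hfr
  let σ' : (E × (Fin d → F)) →ₗ[F] (Fin n → F) := σ.toLinearMap
  have hσinj : Function.Injective σ' := σ.injective
  have hσsurj : Function.Surjective σ' := σ.surjective
  let e : Fin (q ^ (n - d)) ≃ E := (Fintype.equivFinOfCardEq hcardE).symm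
  refine ⟨W₀'.map σ', fun i => (f' (e i)).map σ', ?_, ?_, ?_, ?_, ?_⟩
  · rw [LinearEquiv.finrank_map_eq σ]; exact hW₀rank
  · intro i; rw [LinearEquiv.finrank_map_eq σ]; exact hfrank _
  · intro i
    rw [← Submodule.map_inf σ' hσinj, hinf0, Submodule.map_bot]
  · intro i j hij
    rw [← Submodule.map_inf σ' hσinj, hinf (e i) (e j) (fun h => hij (e.injective h)),
      Submodule.map_bot]
  · rw [Set.eq_univ_iff_forall]
    intro v
    obtain ⟨w, rfl⟩ := hσsurj v
    rcases hcover w with h | ⟨a, h⟩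
    · exact Or.inl (Submodule.mem_map_of_mem h)
    · refine Or.inr (Set.mem_iUnion.mpr ⟨e.symm a, ?_⟩)
      simp only [e.apply_symm_apply]
      exact Submodule.mem_map_of_mem h
end
end

section
/- Let V be an n-dimensional vector space over F_q and 1 ≤ k < n. Then V can be covered by exactly ⌈(q^n - 1)/(q^{n-k} - 1)⌉ subspaces of codimension k, and this number is minimal. -/
open Polynomial Module

universe u

section aux
variable {F : Type u} [Field F] {U K : Type u} [AddCommGroup U] [Module F U]

lemma graph_finrank [AddCommGroup K] [Module F K] [FiniteDimensional F U]
    (T : U →ₗ[F] K) : finrank F (LinearMap.graph T) = finrank F U := by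
  rw [LinearMap.graph_eq_range_prod]
  exact LinearMap.finrank_range_of_inj (fun x y h => by
    simpa using congrArg Prod.fst h)

lemma graph_cover [Field K] [Algebra F K] (T : U →ₗ[F] K) (x : U × K)
    (hx : T x.1 ≠ 0) : ∃ α : K, x ∈ LinearMap.graph (α • T) := by
  refine ⟨x.2 * (T x.1)⁻¹, ?_⟩
  rw [LinearMap.mem_graph_iff, LinearMap.smul_apply, smul_eq_mul,
    mul_assoc, inv_mul_cancel₀ hx, mul_one]

lemma transfer_cover {V P : Type u} [AddCommGroup V] [Module F V]
    [AddCommGroup P] [Module F P] (Φ : P ≃ₗ[F] V) {ι : Type u} [Fintype ι]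
    {d : ℕ} (g : ι → Submodule F P) (hdim : ∀ i, finrank F (g i) = d)
    (hcov : (⋃ i, (g i : Set P)) = Set.univ) :
    ∃ f : Fin (Fintype.card ι) → Submodule F V,
      (∀ i, finrank F (f i) = d) ∧ (⋃ i, (f i : Set V)) = Set.univ := by
  classical
  let e := Fintype.equivFin ι
  refine ⟨fun i => (g (e.symm i)).map (Φ : P →ₗ[F] V), fun i => ?_, ?_⟩
  · rw [LinearEquiv.finrank_map_eq]
    exact hdim _
  · have : (⋃ i, ((g (e.symm i)).map (Φ : P →ₗ[F] V) : Set V))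
        = ⋃ j, ((g j).map (Φ : P →ₗ[F] V) : Set V) := by
      ext x
      simp only [Set.mem_iUnion]
      constructor
      · rintro ⟨i, hi⟩; exact ⟨e.symm i, hi⟩
      · rintro ⟨j, hj⟩; exact ⟨e j, by simpa using hj⟩
    rw [this]
    have : ∀ j, ((g j).map (Φ : P →ₗ[F] V) : Set V) = Φ '' (g j) := by
      intro j; rfl
    simp_rw [this, ← Set.image_iUnion, hcov, Set.image_univ]
    exact Φ.surjective.range_eq

end aux

lemma pow_split (q d e : ℕ) (hq : 1 ≤ q) :
    q ^ e * (q ^ d - 1) + (q ^ e - 1) = q ^ (d + e) - 1 := by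
  have h1 : 1 ≤ q ^ d := Nat.one_le_pow _ _ hq
  have h2 : 1 ≤ q ^ e := Nat.one_le_pow _ _ hq
  have key : q ^ (d + e) = q ^ e * q ^ d := by rw [pow_add, mul_comm]
  have hC : q ^ e * (q ^ d - 1) + q ^ e * 1 = q ^ e * q ^ d := by
    rw [← Nat.mul_add]; congr 1; omega
  omega

lemma arith_base (q d e : ℕ) (hq : 2 ≤ q) (he : 1 ≤ e) (hed : e ≤ d) :
    q ^ e + 1 ≤ (q ^ (d + e) - 1 + (q ^ d - 1) - 1) / (q ^ d - 1) := by
  have h1 : 2 ≤ q ^ d := Nat.one_lt_pow (by omega) (by omega)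
  have h2 : 2 ≤ q ^ e := Nat.one_lt_pow (by omega) (by omega)
  have hs := pow_split q d e (by omega)
  rw [Nat.le_div_iff_mul_le (by omega)]
  have : (q ^ e + 1) * (q ^ d - 1) = q ^ e * (q ^ d - 1) + (q ^ d - 1) := by ring
  omega

lemma arith_step (q d e : ℕ) (hq : 2 ≤ q) (hd : 1 ≤ d) :
    (q ^ (d + e) - 1 + (q ^ d - 1) - 1) / (q ^ d - 1)
      = q ^ e + (q ^ e - 1 + (q ^ d - 1) - 1) / (q ^ d - 1) := by
  have h1 : 2 ≤ q ^ d := Nat.one_lt_pow (by omega) (by omega)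
  have h2 : 1 ≤ q ^ e := Nat.one_le_pow _ _ (by omega)
  have hs := pow_split q d e (by omega)
  have hnum : q ^ (d + e) - 1 + (q ^ d - 1) - 1
      = (q ^ d - 1) * q ^ e + (q ^ e - 1 + (q ^ d - 1) - 1) := by
    rw [mul_comm]; omega
  rw [hnum, Nat.mul_add_div (by omega)]

lemma arith_lower (A B m : ℕ) (hB : 1 ≤ B) (h : A ≤ m * B) :
    (A + B - 1) / B ≤ m := by
  have hle : A + B - 1 ≤ B * m + (B - 1) := by
    have : m * B = B * m := mul_comm _ _
    omega
  calc (A + B - 1) / B ≤ (B * m + (B - 1)) / B := Nat.div_le_div_right hle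
    _ = m + (B - 1) / B := Nat.mul_add_div (by omega) _ _
    _ = m := by rw [Nat.div_eq_of_lt (by omega), add_zero]

open Polynomial in
lemma exists_ext (F : Type u) [Field F] [Fintype F] (e : ℕ) (he : e ≠ 0) :
    ∃ (K : Type u) (_ : Field K) (_ : Algebra F K) (_ : FiniteDimensional F K),
      Module.finrank F K = e := by
  classical
  set p := ringChar F with hpdef
  haveI : CharP F p := ringChar.charP F
  have hp : p.Prime := CharP.char_is_prime F p
  haveI : Fact p.Prime := ⟨hp⟩
  obtain ⟨m, -, hcard⟩ := FiniteField.card F p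
  set q := Fintype.card F with hq
  have hN : (m : ℕ) * e ≠ 0 := by positivity
  set N := (m : ℕ) * e with hNdef
  set g : F[X] := X ^ p ^ N - X with hg
  set K := SplittingField g with hK
  haveI : FiniteDimensional F K := by dsimp only [K]; infer_instance
  haveI : Finite K := Module.finite_of_finite F
  haveI : Fintype K := Fintype.ofFinite K
  haveI : CharP K p := (Algebra.charP_iff F K p).mp ‹_›
  have hp1 : 1 < p := hp.one_lt
  have aux : g ≠ 0 := FiniteField.X_pow_card_pow_sub_X_ne_zero _ hN hp1
  have key : Fintype.card (g.rootSet K) = g.natDegree :=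
    card_rootSet_eq_natDegree (galois_poly_separable p _ (dvd_pow (dvd_refl p) hN))
      (SplittingField.splits g)
  have nat_degree_eq : g.natDegree = p ^ N :=
    FiniteField.X_pow_card_pow_sub_X_natDegree_eq _ hN hp1
  rw [nat_degree_eq] at key
  have huniv : g.rootSet K = Set.univ := by
    rw [Set.eq_univ_iff_forall]
    suffices h : ∀ (x) (_ : x ∈ (⊤ : Subalgebra F K)), x ∈ g.rootSet K by simpa using h
    rw [← SplittingField.adjoin_rootSet]
    simp_rw [Algebra.mem_adjoin_iff]
    intro x hx
    refine Subring.closure_induction ?_ ?_ ?_ ?_ ?_ ?_ hx <;> simp_rw [mem_rootSet_of_ne aux]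
    · rintro x (⟨r, rfl⟩ | hx)
      · simp only [g, map_sub, map_pow, aeval_X]
        rw [← map_pow]
        have : r ^ p ^ N = r := by
          rw [hNdef, pow_mul, ← hcard, FiniteField.pow_card_pow]
        rw [this, sub_self]
      · rwa [mem_rootSet_of_ne aux] at hx
    · rw [← coeff_zero_eq_aeval_zero']
      simp only [g, coeff_X_pow, coeff_X_zero, sub_zero, _root_.map_eq_zero, ite_eq_right_iff,
        one_ne_zero, coeff_sub]
      intro hn
      exact Nat.not_lt_zero 1 (eq_zero_of_pow_eq_zero hn.symm ▸ hp1)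
    · simp [g]
    · simp only [g, aeval_X_pow, aeval_X, map_sub, add_pow_char_pow, sub_eq_zero]
      intro x y _ _ hx hy
      rw [hx, hy]
    · intro x _ hx
      simp only [g, sub_eq_zero, aeval_X_pow, aeval_X, map_sub, sub_neg_eq_add] at *
      rw [neg_pow, hx, neg_one_pow_char_pow]
      rw [neg_one_mul, neg_add_cancel]
    · simp only [g, aeval_X_pow, aeval_X, map_sub, mul_pow, sub_eq_zero]
      intro x y _ _ hx hy
      rw [hx, hy]
  have h2 : Fintype.card (g.rootSet K) = Fintype.card K := by
    exact Fintype.card_congr ((Equiv.setCongr huniv).trans (Equiv.Set.univ K))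
  have hcardK : Fintype.card K = q ^ e := by
    rw [← h2, key, hNdef, pow_mul, ← hcard]
  have hfr : Fintype.card K = q ^ Module.finrank F K := by
    rw [hq, card_eq_pow_finrank (K := F) (V := K)]
  refine ⟨K, inferInstance, inferInstance, inferInstance, ?_⟩
  have : q ^ e = q ^ Module.finrank F K := by rw [← hcardK, hfr]
  exact (Nat.pow_right_injective Fintype.one_lt_card this).symm

section upper
variable (F : Type u) [Field F] [Fintype F]

lemma upper_bound (d : ℕ) (hd : 1 ≤ d) : ∀ n : ℕ, d < n →
    ∀ (V : Type u) [AddCommGroup V] [Module F V] [FiniteDimensional F V],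
      finrank F V = n →
      ∃ (m : ℕ) (f : Fin m → Submodule F V),
        m ≤ ((Fintype.card F) ^ n - 1 + ((Fintype.card F) ^ d - 1) - 1)
              / ((Fintype.card F) ^ d - 1)
        ∧ (∀ i, finrank F (f i) = d) ∧ (⋃ i, (f i : Set V)) = Set.univ := by
  intro n
  induction n using Nat.strong_induction_on with
  | _ n IH =>
  intro hn V _ _ _ hV
  classical
  set q := Fintype.card F with hq
  have hq2 : 2 ≤ q := Fintype.one_lt_card
  set e := n - d with he
  have he1 : 1 ≤ e := by omega
  have hne : n = d + e := by omega
  obtain ⟨K, _, _, _, hK⟩ := exists_ext F e (by omega)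
  haveI : Finite K := Module.finite_of_finite F
  haveI : Fintype K := Fintype.ofFinite K
  have hcardK : Fintype.card K = q ^ e := by
    rw [card_eq_pow_finrank (K := F) (V := K), hK, hq]
  have hfrP : finrank F ((Fin d → F) × K) = n := by
    rw [Module.finrank_prod, Module.finrank_fin_fun, hK, hne]
  obtain ⟨Φ⟩ : Nonempty (((Fin d → F) × K) ≃ₗ[F] V) :=
    FiniteDimensional.nonempty_linearEquiv_of_finrank_eq (by rw [hfrP, hV])
  let b := finBasis F K
  rw [hK] at b
  by_cases hcase : e ≤ d
  · -- base case: T surjective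
    set T : (Fin d → F) →ₗ[F] K :=
      (b.equivFun.symm : (Fin e → F) →ₗ[F] K) ∘ₗ
        LinearMap.funLeft F F (Fin.castLE hcase) with hT
    have hTsurj : Function.Surjective T :=
      b.equivFun.symm.surjective.comp
        (LinearMap.funLeft_surjective_of_injective F F _ (Fin.castLE_injective hcase))
    set kerP : Submodule F ((Fin d → F) × K) := (LinearMap.ker T).prod ⊤ with hkerP
    have hkerdim : finrank F kerP = d := by
      have h1 : kerP = LinearMap.ker (T ∘ₗ LinearMap.fst F (Fin d → F) K) := by
        ext x; simp [hkerP, Submodule.mem_prod, LinearMap.mem_ker]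
      have h2 := LinearMap.finrank_range_add_finrank_ker
        (T ∘ₗ LinearMap.fst F (Fin d → F) K)
      have h3 : LinearMap.range (T ∘ₗ LinearMap.fst F (Fin d → F) K) = ⊤ := by
        rw [LinearMap.range_eq_top]
        exact hTsurj.comp (LinearMap.fst_surjective)
      rw [h3] at h2
      have h4 : finrank F ((Fin d → F) × K) = d + e := by
        rw [Module.finrank_prod, Module.finrank_fin_fun, hK]
      rw [finrank_top, h4, hK] at h2
      rw [h1]
      omega
    set g : Option K → Submodule F ((Fin d → F) × K) :=
      fun o => o.elim kerP (fun α => LinearMap.graph (α • T)) with hgdef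
    have hdim : ∀ o, finrank F (g o) = d := by
      rintro (_ | α)
      · exact hkerdim
      · exact
          (graph_finrank (α • T)).trans (Module.finrank_fin_fun (R := F))
    have hcov : (⋃ o, (g o : Set ((Fin d → F) × K))) = Set.univ := by
      rw [Set.eq_univ_iff_forall]
      intro x
      by_cases hx : T x.1 = 0
      · refine Set.mem_iUnion.2 ⟨none, ?_⟩
        show x ∈ kerP
        rw [hkerP]
        exact Submodule.mem_prod.2 ⟨LinearMap.mem_ker.2 hx, Submodule.mem_top⟩
      · obtain ⟨α, hα⟩ := graph_cover T x hx
        exact Set.mem_iUnion.2 ⟨some α, hα⟩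
    obtain ⟨f, hfdim, hfcov⟩ := transfer_cover Φ g hdim hcov
    refine ⟨Fintype.card (Option K), f, ?_, hfdim, hfcov⟩
    rw [Fintype.card_option, hcardK, hne]
    exact arith_base q d e hq2 he1 hcase
  · -- inductive step: T injective
    push_neg at hcase
    have hsurj : Function.Surjective
        (fun j : Fin e => if h : (j : ℕ) < d then (⟨j, h⟩ : Fin d) else ⟨0, hd⟩) := by
      intro i
      refine ⟨⟨i, lt_of_lt_of_le i.2 (le_of_lt hcase)⟩, ?_⟩
      simp [i.2]
    set T : (Fin d → F) →ₗ[F] K :=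
      (b.equivFun.symm : (Fin e → F) →ₗ[F] K) ∘ₗ
        LinearMap.funLeft F F
          (fun j : Fin e => if h : (j : ℕ) < d then ⟨j, h⟩ else ⟨0, hd⟩) with hT
    have hTinj : Function.Injective T :=
      b.equivFun.symm.injective.comp
        (LinearMap.funLeft_injective_of_surjective F F _ hsurj)
    -- IH on K
    obtain ⟨m', f', hm', hfdim', hfcov'⟩ := IH e (by omega) hcase K hK
    set g : K ⊕ Fin m' → Submodule F ((Fin d → F) × K) :=
      Sum.elim (fun α => LinearMap.graph (α • T))
        (fun i => (f' i).map (LinearMap.inr F (Fin d → F) K)) with hgdef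
    have hdim : ∀ o, finrank F (g o) = d := by
      rintro (α | i)
      · exact
          (graph_finrank (α • T)).trans (Module.finrank_fin_fun (R := F))
      · have hgi : g (Sum.inr i) = (f' i).map (LinearMap.inr F (Fin d → F) K) := rfl
        rw [hgi, ← LinearEquiv.finrank_eq
          (Submodule.equivMapOfInjective _ (LinearMap.inr_injective) (f' i))]
        exact hfdim' i
    have hcov : (⋃ o, (g o : Set ((Fin d → F) × K))) = Set.univ := by
      rw [Set.eq_univ_iff_forall]
      intro x
      by_cases hx : T x.1 = 0
      · have hx1 : x.1 = 0 := by
          apply hTinj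
          simpa using hx
        have : x.2 ∈ ⋃ i, (f' i : Set K) := by rw [hfcov']; trivial
        obtain ⟨i, hi⟩ := Set.mem_iUnion.1 this
        refine Set.mem_iUnion.2 ⟨Sum.inr i, ?_⟩
        simp only [hgdef, Sum.elim_inr, SetLike.mem_coe, Submodule.mem_map]
        exact ⟨x.2, hi, by rw [LinearMap.inr_apply, ← hx1]⟩
      · obtain ⟨α, hα⟩ := graph_cover T x hx
        exact Set.mem_iUnion.2 ⟨Sum.inl α, hα⟩
    obtain ⟨f, hfdim, hfcov⟩ := transfer_cover Φ g hdim hcov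
    refine ⟨Fintype.card (K ⊕ Fin m'), f, ?_, hfdim, hfcov⟩
    rw [Fintype.card_sum, hcardK, Fintype.card_fin, hne, arith_step q d e hq2 hd]
    omega

end upper

theorem stmt_18 (F : Type*) [Field F] [Fintype F] (q n k : ℕ)
    (hq : Fintype.card F = q) (hk1 : 1 ≤ k) (hkn : k < n) :
    IsLeast {m : ℕ | ∃ f : Fin m → Submodule F (Fin n → F),
        (∀ i, Module.finrank F (f i) = n - k) ∧ (⋃ i, (f i : Set (Fin n → F))) = Set.univ}
      (((q ^ n - 1) + (q ^ (n - k) - 1) - 1) / (q ^ (n - k) - 1)) := by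
  classical
  subst hq
  set q := Fintype.card F with hq
  have hq2 : 2 ≤ q := Fintype.one_lt_card
  set d := n - k with hd
  have hd1 : 1 ≤ d := by omega
  have hdn : d < n := by omega
  have hVfr : finrank F (Fin n → F) = n := Module.finrank_fin_fun F
  have hcardV : Fintype.card (Fin n → F) = q ^ n := by
    rw [card_eq_pow_finrank (K := F) (V := Fin n → F), hVfr]
  set c := (q ^ n - 1 + (q ^ d - 1) - 1) / (q ^ d - 1) with hc
  constructor
  · -- membership
    obtain ⟨m₀, f₀, hm₀, hdim₀, hcov₀⟩ :=
      upper_bound F d hd1 n hdn (Fin n → F) hVfr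
    have hpos : 0 < m₀ := by
      have : (0 : Fin n → F) ∈ ⋃ i, (f₀ i : Set (Fin n → F)) := by
        rw [hcov₀]; trivial
      obtain ⟨i, -⟩ := Set.mem_iUnion.1 this
      exact i.pos
    refine ⟨fun i => f₀ (if h : (i : ℕ) < m₀ then ⟨i, h⟩ else ⟨0, hpos⟩), fun i => ?_, ?_⟩
    · exact hdim₀ _
    · rw [Set.eq_univ_iff_forall]
      intro x
      have : x ∈ ⋃ i, (f₀ i : Set (Fin n → F)) := by rw [hcov₀]; trivial
      obtain ⟨i₀, hi₀⟩ := Set.mem_iUnion.1 this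
      have hlt : (i₀ : ℕ) < c := lt_of_lt_of_le i₀.2 hm₀
      refine Set.mem_iUnion.2 ⟨⟨i₀, hlt⟩, ?_⟩
      simpa [i₀.2] using hi₀
  · -- lower bound
    rintro m ⟨f, hdim, hcov⟩
    have hsetcard : ∀ i : Fin m, ((f i : Set (Fin n → F)).toFinset).card = q ^ d := by
      intro i
      rw [Set.toFinset_card]
      have h1 : Fintype.card ((f i : Set (Fin n → F))) = Fintype.card (f i) :=
        Fintype.card_congr (Equiv.refl _)
      rw [h1, card_eq_pow_finrank (K := F), hdim i]
    have hsub : (Finset.univ.erase (0 : Fin n → F)) ⊆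
        Finset.univ.biUnion
          (fun i : Fin m => ((f i : Set (Fin n → F)).toFinset).erase 0) := by
      intro x hx
      obtain ⟨hx0, -⟩ := Finset.mem_erase.1 hx
      have : x ∈ ⋃ i, (f i : Set (Fin n → F)) := by rw [hcov]; trivial
      obtain ⟨i, hi⟩ := Set.mem_iUnion.1 this
      exact Finset.mem_biUnion.2
        ⟨i, Finset.mem_univ _, Finset.mem_erase.2 ⟨hx0, Set.mem_toFinset.2 hi⟩⟩
    have hcard1 : (Finset.univ.erase (0 : Fin n → F)).card = q ^ n - 1 := by
      rw [Finset.card_erase_of_mem (Finset.mem_univ _), Finset.card_univ, hcardV]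
    have hcard2 : ∀ i : Fin m,
        (((f i : Set (Fin n → F)).toFinset).erase 0).card = q ^ d - 1 := by
      intro i
      rw [Finset.card_erase_of_mem
        (Set.mem_toFinset.2 (Submodule.zero_mem (f i))), hsetcard i]
    have hchain : q ^ n - 1 ≤ m * (q ^ d - 1) := by
      calc q ^ n - 1 = (Finset.univ.erase (0 : Fin n → F)).card := hcard1.symm
        _ ≤ (Finset.univ.biUnion
              (fun i : Fin m => ((f i : Set (Fin n → F)).toFinset).erase 0)).card :=
          Finset.card_le_card hsub
        _ ≤ ∑ i : Fin m, (((f i : Set (Fin n → F)).toFinset).erase 0).card :=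
          Finset.card_biUnion_le
        _ = ∑ _i : Fin m, (q ^ d - 1) := by
          exact Finset.sum_congr rfl (fun i _ => hcard2 i)
        _ = m * (q ^ d - 1) := by
          rw [Finset.sum_const, Finset.card_univ, Fintype.card_fin, smul_eq_mul]
    have hB : 1 ≤ q ^ d - 1 := by
      have : 2 ≤ q ^ d := Nat.one_lt_pow (by omega) (by omega)
      omega
    exact arith_lower _ _ _ hB hchain
end

section
/- Let V be an infinite-dimensional vector space over the finite field F_q and k ≥ 1. Then V can be covered by q^k + 1 subspaces of codimension k, and cannot be covered by q^k or fewer subspaces of codimension at least k. -/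
open Polynomial

theorem aux_finrank (F : Type*) [Field F] [Fintype F] (k : ℕ) (hk : k ≠ 0) :
    Module.finrank F ((X ^ Fintype.card F ^ k - X : F[X]).SplittingField) = k := by
  classical
  set q := Fintype.card F with hqdef
  set K := (X ^ q ^ k - X : F[X]).SplittingField with hK
  obtain ⟨p, hp_char⟩ := CharP.exists F
  haveI : CharP F p := hp_char
  obtain ⟨m, hp_prime, hqm⟩ := FiniteField.card F p
  haveI hfact : Fact p.Prime := ⟨hp_prime⟩
  haveI : CharP K p := (Algebra.charP_iff F K p).mp inferInstance
  haveI : FiniteDimensional F K :=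
    inferInstanceAs (FiniteDimensional F ((X ^ q ^ k - X : F[X]).SplittingField))
  haveI : Finite K := Module.finite_of_finite F
  haveI : Fintype K := Fintype.ofFinite K
  have hq1 : 1 < q := Fintype.one_lt_card
  have hqm' : q = p ^ (m : ℕ) := hqm
  have hm0 : (m : ℕ) ≠ 0 := m.pos.ne'
  have hpq : p ∣ q ^ k := dvd_trans (hqm' ▸ dvd_pow_self p hm0) (dvd_pow_self q hk)
  set g : F[X] := X ^ q ^ k - X with hg
  have aux : g ≠ 0 := FiniteField.X_pow_card_pow_sub_X_ne_zero F hk hq1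
  have sep : g.Separable := galois_poly_separable p (q ^ k) hpq
  have key : Fintype.card (g.rootSet K) = g.natDegree :=
    card_rootSet_eq_natDegree sep (SplittingField.splits g)
  have nat_degree_eq : g.natDegree = q ^ k :=
    FiniteField.X_pow_card_pow_sub_X_natDegree_eq F hk hq1
  rw [nat_degree_eq] at key
  have hqk : q ^ k = p ^ (m * k) := by rw [hqm', pow_mul]
  suffices huniv : g.rootSet K = Set.univ by
    simp_rw [huniv, ← Fintype.ofEquiv_card (Equiv.Set.univ _)] at key
    show Module.finrank F K = k
    rw [@Module.card_eq_pow_finrank F _ _ _ _ _ (_)] at key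
    exact Nat.pow_right_injective hq1 key
  rw [Set.eq_univ_iff_forall]
  suffices h : ∀ (x) (_ : x ∈ (⊤ : Subalgebra F K)), x ∈ g.rootSet K by simpa using fun x => h x trivial
  rw [← SplittingField.adjoin_rootSet]
  simp_rw [Algebra.mem_adjoin_iff]
  intro x hx
  refine Subring.closure_induction ?_ ?_ ?_ ?_ ?_ ?_ hx <;> simp_rw [mem_rootSet_of_ne aux]
  · rintro x (⟨r, rfl⟩ | hx)
    · simp only [g, map_sub, map_pow, aeval_X]
      rw [← map_pow, FiniteField.pow_card_pow, sub_self]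
    · rwa [mem_rootSet_of_ne aux] at hx
  · rw [← coeff_zero_eq_aeval_zero']
    simp only [g, coeff_X_pow, coeff_X_zero, sub_zero, _root_.map_eq_zero, ite_eq_right_iff,
      one_ne_zero, coeff_sub]
    intro hn
    exact Nat.not_lt_zero 1 (eq_zero_of_pow_eq_zero hn.symm ▸ hq1)
  · simp [g]
  · simp only [g, aeval_X_pow, aeval_X, map_sub, hqk, add_pow_char_pow, sub_eq_zero]
    intro x y _ _ hx hy
    rw [hx, hy]
  · intro x _ hx
    simp only [g, sub_eq_zero, aeval_X_pow, aeval_X, map_sub, sub_neg_eq_add, hqk] at *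
    rw [neg_pow, hx, neg_one_pow_char_pow]
    ring
  · simp only [g, aeval_X_pow, aeval_X, map_sub, mul_pow, sub_eq_zero]
    intro x y _ _ hx hy
    rw [hx, hy]

theorem stmt_19 (F V : Type*) [Field F] [Fintype F] (q : ℕ) (hq : Fintype.card F = q)
    [AddCommGroup V] [Module F V] (hV : ¬ FiniteDimensional F V) (k : ℕ) (hk : 1 ≤ k) :
    (∃ f : Fin (q ^ k + 1) → Submodule F V,
        (∀ i, Module.finrank F (V ⧸ f i) = k) ∧ (⋃ i, (f i : Set V)) = Set.univ) ∧
    (∀ (m : ℕ), m ≤ q ^ k → ∀ f : Fin m → Submodule F V,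
        (∀ i, (k : Cardinal) ≤ Module.rank F (V ⧸ f i)) →
        (⋃ i, (f i : Set V)) ≠ Set.univ) := by
  classical
  subst hq
  have hk0 : k ≠ 0 := by omega
  have hq1 : 1 < Fintype.card F := Fintype.one_lt_card
  constructor
  · -- Part 1: existence of a covering by q^k + 1 subspaces of codimension k
    set K := (X ^ Fintype.card F ^ k - X : F[X]).SplittingField with hKdef
    haveI : FiniteDimensional F K :=
      inferInstanceAs (FiniteDimensional F ((X ^ Fintype.card F ^ k - X : F[X]).SplittingField))
    have hrk : Module.finrank F K = k := aux_finrank F k hk0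
    haveI : Finite K := Module.finite_of_finite F
    haveI : Fintype K := Fintype.ofFinite K
    have hcardK : Fintype.card K = Fintype.card F ^ k := by
      rw [Module.card_eq_pow_finrank (K := F) (V := K), hrk]
    -- the lines in K × K
    let φ : Option K → (K →ₗ[F] K × K) := fun a =>
      Option.rec (LinearMap.prod 0 LinearMap.id)
        (fun a => LinearMap.prod LinearMap.id (LinearMap.mulLeft F a)) a
    have hφinj : ∀ a, Function.Injective (φ a) := by
      rintro (_ | a) x y hxy
      · exact congrArg Prod.snd hxy
      · exact congrArg Prod.fst hxy
    have hφrank : ∀ a, Module.finrank F (LinearMap.range (φ a)) = k := fun a => by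
      rw [LinearMap.finrank_range_of_inj (hφinj a), hrk]
    have hcover : ∀ w : K × K, ∃ a, w ∈ LinearMap.range (φ a) := by
      intro w
      by_cases h : w.1 = 0
      · refine ⟨none, w.2, ?_⟩
        show ((0 : K), w.2) = w
        rw [← h]
      · refine ⟨some (w.2 * w.1⁻¹), w.1, ?_⟩
        show (w.1, w.2 * w.1⁻¹ * w.1) = w
        rw [mul_assoc, inv_mul_cancel₀ h, mul_one]
    -- a surjection from V onto K × K
    set W := (K × K) with hWdef
    haveI : FiniteDimensional F W := inferInstance
    have hrkW : Module.finrank F W = k + k := by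
      show Module.finrank F (K × K) = k + k
      rw [Module.finrank_prod, hrk]
    let b := Module.Basis.ofVectorSpace F V
    haveI : Infinite (Module.Basis.ofVectorSpaceIndex F V) := by
      by_contra hfin
      rw [not_infinite_iff_finite] at hfin
      exact hV (Module.Finite.of_basis b)
    let bw := Module.finBasis F W
    let e : Fin (Module.finrank F W) ↪ Module.Basis.ofVectorSpaceIndex F V :=
      (Fin.valEmbedding).trans (Infinite.natEmbedding _)
    let π : V →ₗ[F] W := b.constr F (fun i => if h : ∃ j, e j = i then bw h.choose else 0)
    have hπb : ∀ j, π (b (e j)) = bw j := by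
      intro j
      rw [Module.Basis.constr_basis]
      have h : ∃ j', e j' = e j := ⟨j, rfl⟩
      rw [dif_pos h]
      exact congrArg bw (e.injective h.choose_spec)
    have hπsurj : Function.Surjective π := by
      rw [← LinearMap.range_eq_top, ← top_le_iff, ← bw.span_eq]
      apply Submodule.span_le.mpr
      rintro _ ⟨j, rfl⟩
      exact ⟨b (e j), hπb j⟩
    let eqv : Fin (Fintype.card F ^ k + 1) ≃ Option K := by
      apply (Fintype.equivFinOfCardEq _).symm
      rw [Fintype.card_option, hcardK]
    refine ⟨fun i => LinearMap.ker ((LinearMap.range (φ (eqv i))).mkQ ∘ₗ π), ?_, ?_⟩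
    · intro i
      set L := LinearMap.range (φ (eqv i))
      have hsurj : Function.Surjective (L.mkQ ∘ₗ π) :=
        (Submodule.mkQ_surjective L).comp hπsurj
      have equiv := LinearMap.quotKerEquivOfSurjective _ hsurj
      rw [equiv.finrank_eq]
      have h1 := Submodule.finrank_quotient_add_finrank L
      rw [hrkW, hφrank] at h1
      omega
    · rw [Set.eq_univ_iff_forall]
      intro v
      obtain ⟨a, ha⟩ := hcover (π v)
      refine Set.mem_iUnion.2 ⟨eqv.symm a, ?_⟩
      show v ∈ LinearMap.ker ((LinearMap.range (φ (eqv (eqv.symm a)))).mkQ ∘ₗ π)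
      rw [LinearMap.ker_comp, Submodule.ker_mkQ, Submodule.mem_comap, eqv.apply_symm_apply]
      exact ha
  · -- Part 2: no covering by at most q^k subspaces of codimension at least k
    intro m hm f hcodim hcover
    -- pick independent vectors in each quotient
    have hgs : ∀ i : Fin m, ∃ g : Fin k → V ⧸ f i, LinearIndependent F g := fun i =>
      exists_linearIndependent_of_le_rank (hcodim i)
    choose g hg using hgs
    have hvs : ∀ (i : Fin m) (j : Fin k), ∃ v : V, Submodule.Quotient.mk v = g i j := fun i j =>
      Submodule.Quotient.mk_surjective (f i) (g i j)
    choose v hv using hvs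
    set S : Submodule F V := Submodule.span F (Set.range fun p : Fin m × Fin k => v p.1 p.2)
      with hSdef
    haveI : FiniteDimensional F S := FiniteDimensional.span_of_finite F (Set.finite_range _)
    set n := Module.finrank F S with hndef
    let ψ : ∀ _ : Fin m, S →ₗ[F] V ⧸ f _ := fun i => (f i).mkQ ∘ₗ S.subtype
    have hmemS : ∀ (i : Fin m) (j : Fin k), v i j ∈ S := fun i j =>
      Submodule.subset_span ⟨(i, j), rfl⟩
    have hrange : ∀ (i : Fin m) (j : Fin k), g i j ∈ LinearMap.range (ψ i) := fun i j =>
      ⟨⟨v i j, hmemS i j⟩, hv i j⟩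
    have hk_le : ∀ i, k ≤ Module.finrank F (S ⧸ LinearMap.ker (ψ i)) := by
      intro i
      have equiv := LinearMap.quotKerEquivRange (ψ i)
      rw [equiv.finrank_eq]
      let G : Fin k → LinearMap.range (ψ i) := fun j => ⟨g i j, hrange i j⟩
      have hG : LinearIndependent F G := by
        apply LinearIndependent.of_comp (LinearMap.range (ψ i)).subtype
        exact hg i
      simpa using hG.fintype_card_le_finrank
    have hT : ∀ i, Module.finrank F (LinearMap.ker (ψ i)) + k ≤ n := by
      intro i
      have h1 := Submodule.finrank_quotient_add_finrank (LinearMap.ker (ψ i))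
      have h2 := hk_le i
      omega
    haveI : Finite S := Module.finite_of_finite F
    haveI : Fintype S := Fintype.ofFinite S
    have hcardS : Fintype.card S = Fintype.card F ^ n := Module.card_eq_pow_finrank (K := F) (V := S)
    -- at least one subspace exists
    have h0 : (0 : V) ∈ ⋃ i, (f i : Set V) := hcover ▸ Set.mem_univ 0
    obtain ⟨i0, _⟩ := Set.mem_iUnion.1 h0
    have hkn : k ≤ n := by have := hT i0; omega
    -- counting
    have hsub : Finset.univ.erase (0 : S) ⊆
        Finset.univ.biUnion (fun i : Fin m =>
          ((LinearMap.ker (ψ i) : Set S)).toFinset.erase 0) := by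
      intro s hs
      rw [Finset.mem_erase] at hs
      have hsV : (s : V) ∈ ⋃ i, (f i : Set V) := hcover ▸ Set.mem_univ _
      obtain ⟨i, hi⟩ := Set.mem_iUnion.1 hsV
      refine Finset.mem_biUnion.2 ⟨i, Finset.mem_univ i, ?_⟩
      rw [Finset.mem_erase, Set.mem_toFinset]
      refine ⟨hs.1, ?_⟩
      show s ∈ LinearMap.ker (ψ i)
      rw [LinearMap.mem_ker]
      show Submodule.Quotient.mk (s : V) = 0
      rwa [Submodule.Quotient.mk_eq_zero]
    have hcard1 : (Finset.univ.erase (0 : S)).card = Fintype.card F ^ n - 1 := by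
      rw [Finset.card_erase_of_mem (Finset.mem_univ _), Finset.card_univ, hcardS]
    have hcard2 : ∀ i : Fin m,
        (((LinearMap.ker (ψ i) : Set S)).toFinset.erase 0).card ≤
          Fintype.card F ^ (n - k) - 1 := by
      intro i
      have h6 : ((LinearMap.ker (ψ i) : Set S)).toFinset.card =
          Fintype.card (LinearMap.ker (ψ i)) := by
        simp
      have h0m : (0 : S) ∈ ((LinearMap.ker (ψ i) : Set S)).toFinset := by
        rw [Set.mem_toFinset]
        exact Submodule.zero_mem _
      rw [Finset.card_erase_of_mem h0m, h6]
      have h3 : Fintype.card (LinearMap.ker (ψ i)) =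
          Fintype.card F ^ Module.finrank F (LinearMap.ker (ψ i)) :=
        Module.card_eq_pow_finrank (K := F)
      have h4 : Module.finrank F (LinearMap.ker (ψ i)) ≤ n - k := by have := hT i; omega
      have h5 : Fintype.card F ^ Module.finrank F (LinearMap.ker (ψ i)) ≤
          Fintype.card F ^ (n - k) := Nat.pow_le_pow_right (by omega) h4
      omega
    have hmain : Fintype.card F ^ n - 1 ≤ m * (Fintype.card F ^ (n - k) - 1) := by
      calc Fintype.card F ^ n - 1 = (Finset.univ.erase (0 : S)).card := hcard1.symm
        _ ≤ (Finset.univ.biUnion (fun i : Fin m =>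
              ((LinearMap.ker (ψ i) : Set S)).toFinset.erase 0)).card :=
            Finset.card_le_card hsub
        _ ≤ ∑ i : Fin m, (((LinearMap.ker (ψ i) : Set S)).toFinset.erase 0).card :=
            Finset.card_biUnion_le
        _ ≤ ∑ i : Fin m, (Fintype.card F ^ (n - k) - 1) :=
            Finset.sum_le_sum (fun i _ => hcard2 i)
        _ = m * (Fintype.card F ^ (n - k) - 1) := by
            rw [Finset.sum_const, Finset.card_univ, Fintype.card_fin, smul_eq_mul]
    -- arithmetic contradiction
    have hA : m * (Fintype.card F ^ (n - k) - 1) ≤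
        Fintype.card F ^ k * (Fintype.card F ^ (n - k) - 1) :=
      Nat.mul_le_mul_right _ hm
    have hB : Fintype.card F ^ k * (Fintype.card F ^ (n - k) - 1) =
        Fintype.card F ^ n - Fintype.card F ^ k := by
      rw [Nat.mul_sub, mul_one, ← pow_add]
      congr 2
      omega
    have hC : 2 ≤ Fintype.card F ^ k :=
      le_trans hq1 (Nat.le_self_pow hk0 _)
    have hD : Fintype.card F ^ k ≤ Fintype.card F ^ n :=
      Nat.pow_le_pow_right (by omega) hkn
    omega
end
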